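/- Suppose the sorted orbit of θ is 2-periodic with gaps d_0 > d_1 > 0, (N/2)(d_0+d_1)=1, and θ = l(d_0+d_1) + d_0 for some integer l ≥ 0. Then frac(2θ) must equal m(d_0+d_1) + (d_0 − d_1) for some integer m, and membership of frac(2θ) in the orbit forces d_0 − d_1 ∈ {0, d_0}, i.e., d_1 = 0 or d_0 = d_1 — a contradiction. Hence no such θ exists for N > 2. -/
import Mathlib

lemma no_small_int_multiple (L x : ℝ) (hL : 0 < L) (hx : 0 < x) (hxL : x < L)
    (k : ℤ) (h : (k : ℝ) * L = x) : False := by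
  have hk0 : (0 : ℝ) < (k : ℝ) := by nlinarith
  have hk1 : ((k : ℝ)) < 1 := by nlinarith
  have h0 : (0 : ℤ) < k := by exact_mod_cast hk0
  have h1 : k < 1 := by exact_mod_cast hk1
  omega

/-- Suppose `N > 2` is even, the orbit `{frac(jθ) : j = 0,…,N-1}` equals the 2-periodic
pattern `{mL, mL + d_0 : 0 ≤ m ≤ N/2 - 1}` with gaps `d_0 > d_1 > 0`,
`(N/2)(d_0+d_1) = 1`, `L = d_0 + d_1`, and `θ = l(d_0+d_1) + d_0` for some integer
`l ≥ 0`.  Then membership of `frac(2θ)` in the orbit forces `d_0 - d_1 ∈ {0, d_0}`,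
i.e. `d_1 = 0` or `d_0 = d_1` — a contradiction.  Hence no such `θ` exists. -/
theorem no_ssh2_with_shifted_angle
    (N : ℕ) (hN : 2 < N) (hNe : Even N)
    (d0 d1 : ℝ) (hd1 : 0 < d1) (hlt : d1 < d0)
    (L : ℝ) (hL : L = d0 + d1) (hsum : ((N : ℝ) / 2) * L = 1)
    (l : ℕ) (θ : ℝ) (hθ : θ = l * L + d0)
    (horb : (Finset.range N).image (fun j : ℕ => Int.fract ((j : ℝ) * θ)) =
      (Finset.range (N / 2)).image (fun m : ℕ => (m : ℝ) * L) ∪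
        (Finset.range (N / 2)).image fun m : ℕ => (m : ℝ) * L + d0) :
    False := by
  set M := N / 2 with hMdef
  have hNM : N = 2 * M := (Nat.two_mul_div_two_of_even hNe).symm
  have hMcast : ((N : ℝ) / 2) = (M : ℝ) := by
    rw [hNM]; push_cast; ring
  have hML : (M : ℝ) * L = 1 := by rw [← hMcast]; exact hsum
  have hMpos : 0 < M := by omega
  have hLpos : 0 < L := by rw [hL]; linarith
  -- arithmetic of 2l+1 mod M
  set q := (2 * l + 1) / M with hq
  set m := (2 * l + 1) % M with hm
  have hdm : q * M + m = 2 * l + 1 := by rw [Nat.mul_comm q M]; exact Nat.div_add_mod (2 * l + 1) M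
  have hmM : m < M := Nat.mod_lt _ hMpos
  have hdmR : (q : ℝ) * M + m = 2 * l + 1 := by exact_mod_cast hdm
  -- frac(2θ) = mL + (d0 - d1)
  have hfrac : Int.fract ((2 : ℝ) * θ) = (m : ℝ) * L + (d0 - d1) := by
    rw [Int.fract_eq_iff]
    refine ⟨by nlinarith [Nat.cast_nonneg (α := ℝ) m], ?_, ⟨(q : ℤ), ?_⟩⟩
    · have hmle : (m : ℝ) + 1 ≤ (M : ℝ) := by exact_mod_cast hmM
      nlinarith
    · push_cast
      rw [hθ, hL] at *
      nlinarith [hdmR]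
  -- frac(2θ) is in the orbit
  have hmem : Int.fract ((2 : ℝ) * θ) ∈
      (Finset.range M).image (fun m : ℕ => (m : ℝ) * L) ∪
        (Finset.range M).image fun m : ℕ => (m : ℝ) * L + d0 := by
    rw [← horb]
    refine Finset.mem_image.mpr ⟨2, Finset.mem_range.mpr hN, by norm_num⟩
  rw [hfrac] at hmem
  rcases Finset.mem_union.mp hmem with h | h
  · obtain ⟨m', _, hm'⟩ := Finset.mem_image.mp h
    refine no_small_int_multiple L (d0 - d1) hLpos (by linarith) (by linarith) ((m' : ℤ) - m) ?_
    push_cast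
    linarith [hm']
  · obtain ⟨m', _, hm'⟩ := Finset.mem_image.mp h
    refine no_small_int_multiple L d1 hLpos hd1 (by linarith) ((m : ℤ) - m') ?_
    push_cast
    linarith [hm']
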